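/- arXiv:1707.09257 — 3 statements merged into one kernel-verified Lean document; each statement's English description precedes it below -/
import Mathlib

section
/- Let p ∈ (1, ∞), let E = ℂ² with the ℓ^p norm, and let f be the operator given by the matrix with rows (1,1) and (0,0). Then f is idempotent and its operator norm equals 2^{1 - 1/p}. -/
open scoped ENNReal

lemma aux_key {a b r : ℝ} (ha : 0 ≤ a) (hb : 0 ≤ b) (hr : 1 ≤ r) :
    a + b ≤ 2 ^ (1 - 1 / r) * (a ^ r + b ^ r) ^ (1 / r) := by
  have hr0 : 0 < r := lt_of_lt_of_le one_pos hr
  lift a to NNReal using ha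
  lift b to NNReal using hb
  have key := NNReal.rpow_add_le_mul_rpow_add_rpow a b hr
  have keyR : ((a : ℝ) + b) ^ r ≤ 2 ^ (r - 1) * ((a : ℝ) ^ r + (b : ℝ) ^ r) := by
    exact_mod_cast key
  calc (a : ℝ) + b = (((a : ℝ) + b) ^ r) ^ (1 / r) := by
        rw [one_div, Real.rpow_rpow_inv (by positivity) hr0.ne']
    _ ≤ (2 ^ (r - 1) * ((a : ℝ) ^ r + (b : ℝ) ^ r)) ^ (1 / r) :=
        Real.rpow_le_rpow (by positivity) keyR (by positivity)
    _ = 2 ^ (1 - 1 / r) * ((a : ℝ) ^ r + (b : ℝ) ^ r) ^ (1 / r) := by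
        rw [Real.mul_rpow (by positivity) (by positivity),
          ← Real.rpow_mul (by norm_num)]
        congr 1
        field_simp

/-- For `p ∈ (1, ∞)`, the operator on `ℓ^p_2 = (ℂ², ‖·‖_p)` given by the
matrix with rows `(1,1)` and `(0,0)` is an idempotent of operator norm `2^(1 - 1/p)`. -/
theorem stmt_2 (p : ℝ≥0∞) [Fact (1 ≤ p)] (hp1 : 1 < p) (hp : p ≠ ⊤)
    (f : PiLp p (fun _ : Fin 2 => ℂ) →L[ℂ] PiLp p (fun _ : Fin 2 => ℂ))
    (hf : ∀ x : PiLp p (fun _ : Fin 2 => ℂ), f x 0 = x 0 + x 1 ∧ f x 1 = 0) :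
    f ∘L f = f ∧ ‖f‖ = 2 ^ (1 - 1 / p.toReal) := by
  have hr1 : 1 < p.toReal := by
    have := (ENNReal.toReal_lt_toReal (by simp) hp).mpr hp1
    simpa using this
  set r := p.toReal with hrdef
  have hr0 : 0 < r := lt_trans one_pos hr1
  have hnorm : ∀ x : PiLp p (fun _ : Fin 2 => ℂ), ‖f x‖ = ‖x 0 + x 1‖ := by
    intro x
    rw [PiLp.norm_eq_sum hr0, Fin.sum_univ_two, (hf x).1, (hf x).2, norm_zero,
      Real.zero_rpow hr0.ne', add_zero, one_div,
      Real.rpow_rpow_inv (norm_nonneg _) hr0.ne']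
  constructor
  · ext x i
    fin_cases i
    · show f (f x) 0 = f x 0
      rw [(hf (f x)).1, (hf x).2, add_zero]
    · show f (f x) 1 = f x 1
      rw [(hf (f x)).2, (hf x).2]
  · apply le_antisymm
    · apply f.opNorm_le_bound (by positivity)
      intro x
      rw [hnorm x, PiLp.norm_eq_sum hr0, Fin.sum_univ_two]
      calc ‖x 0 + x 1‖ ≤ ‖x 0‖ + ‖x 1‖ := norm_add_le _ _
        _ ≤ 2 ^ (1 - 1 / r) * (‖x 0‖ ^ r + ‖x 1‖ ^ r) ^ (1 / r) :=
            aux_key (norm_nonneg _) (norm_nonneg _) hr1.le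
    · set y : PiLp p (fun _ : Fin 2 => ℂ) := (WithLp.equiv p (Fin 2 → ℂ)).symm ![1, 1] with hy
      have hy0 : y 0 = 1 := rfl
      have hy1 : y 1 = 1 := rfl
      have hfy : ‖f y‖ = 2 := by
        rw [hnorm y, hy0, hy1]
        norm_num
      have hyn : ‖y‖ = 2 ^ (1 / r) := by
        rw [PiLp.norm_eq_sum hr0, Fin.sum_univ_two, hy0, hy1, norm_one,
          Real.one_rpow]
        norm_num
        rfl
      have hle := f.le_opNorm y
      rw [hfy, hyn] at hle
      rw [Real.rpow_sub two_pos, Real.rpow_one, div_le_iff₀ (by positivity)]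
      linarith
end

section
/- Let A be a unital Banach algebra with ‖1‖ = 1 and let e ∈ A be an idempotent. Then ‖exp(iλe)‖ ≤ 1 for all real λ if and only if the homomorphism β_e : ℂ ⊕ ℂ → A, β_e(λ₁, λ₂) = λ₁ e + λ₂(1 − e), is contractive, where ℂ ⊕ ℂ carries the maximum norm. -/
set_option maxHeartbeats 1000000

lemma exp_idem {A : Type*} [NormedRing A] [NormedAlgebra ℂ A] [CompleteSpace A]
    (e : A) (he : e * e = e) (c : ℂ) :
    NormedSpace.exp (c • e) = Complex.exp c • e + (1 - e) := by
  have hpow : ∀ n : ℕ, e ^ (n + 1) = e := by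
    intro n
    induction n with
    | zero => simp
    | succ n ih => rw [pow_succ, ih, he]
  have hsumA : Summable fun n : ℕ => ((n.factorial : ℂ))⁻¹ • (c • e) ^ n :=
    NormedSpace.expSeries_summable' (c • e)
  have hsumC : Summable fun n : ℕ => ((n.factorial : ℂ))⁻¹ • c ^ n :=
    NormedSpace.expSeries_summable' (𝕂 := ℂ) c
  have hsumC' : Summable fun n : ℕ => ((n + 1).factorial : ℂ)⁻¹ • c ^ (n + 1) :=
    (summable_nat_add_iff 1).mpr hsumC
  have hA : NormedSpace.exp (c • e)
      = 1 + (∑' n : ℕ, ((n + 1).factorial : ℂ)⁻¹ • c ^ (n + 1)) • e := by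
    rw [NormedSpace.exp_eq_tsum ℂ]
    dsimp only
    rw [Summable.tsum_eq_zero_add hsumA]
    congr 1
    · simp
    · rw [← Summable.tsum_smul_const hsumC' e]
      congr 1
      ext n
      rw [smul_pow, hpow, smul_smul, smul_eq_mul]
  have hC : Complex.exp c = 1 + ∑' n : ℕ, ((n + 1).factorial : ℂ)⁻¹ • c ^ (n + 1) := by
    rw [Complex.exp_eq_exp_ℂ, NormedSpace.exp_eq_tsum ℂ]
    dsimp only
    rw [Summable.tsum_eq_zero_add hsumC]
    simp
  rw [hA]
  have h2 : (∑' n : ℕ, ((n + 1).factorial : ℂ)⁻¹ • c ^ (n + 1)) = Complex.exp c - 1 := by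
    rw [hC]; ring
  rw [h2, sub_smul, one_smul]
  abel

lemma disc_bound {A : Type*} [NormedRing A] [NormedAlgebra ℂ A]
    (x y : A) (h : ∀ z : ℂ, ‖z‖ = 1 → ‖z • x + y‖ ≤ 1) :
    ∀ z : ℂ, ‖z‖ ≤ 1 → ‖z • x + y‖ ≤ 1 := by
  intro z hz
  set θ : ℝ := z.arg with hθ
  set φ : ℝ := Real.arccos (‖z‖) with hφ
  set u : ℂ := Complex.exp ((↑(θ + φ)) * Complex.I) with hu'
  set v : ℂ := Complex.exp ((↑(θ - φ)) * Complex.I) with hv'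
  have hu : ‖u‖ = 1 := Complex.norm_exp_ofReal_mul_I _
  have hv : ‖v‖ = 1 := Complex.norm_exp_ofReal_mul_I _
  have hcos : Real.cos φ = ‖z‖ :=
    Real.cos_arccos (by linarith [norm_nonneg z]) hz
  have huv : u + v = 2 * z := by
    rw [hu', hv']
    have e1 : ((θ + φ : ℝ) : ℂ) * Complex.I = (θ : ℂ) * Complex.I + (φ : ℂ) * Complex.I := by
      push_cast; ring
    have e2 : ((θ - φ : ℝ) : ℂ) * Complex.I = (θ : ℂ) * Complex.I + (-φ : ℂ) * Complex.I := by
      push_cast; ring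
    rw [e1, e2, Complex.exp_add, Complex.exp_add, ← mul_add]
    simp only [Complex.exp_mul_I]
    have : Complex.cos (φ : ℂ) + Complex.sin (φ : ℂ) * Complex.I
        + (Complex.cos (-φ : ℂ) + Complex.sin (-φ : ℂ) * Complex.I)
        = 2 * Complex.cos (φ : ℂ) := by
      rw [Complex.cos_neg, Complex.sin_neg]; ring
    have hcphi : Complex.cos (φ : ℂ) = ((‖z‖ : ℝ) : ℂ) := by
      rw [← Complex.ofReal_cos, hcos]
    rw [this, hcphi]
    have habs := Complex.norm_mul_exp_arg_mul_I z
    rw [Complex.exp_mul_I] at habs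
    linear_combination 2 * habs
  have hz2 : z = 2⁻¹ * (u + v) := by rw [huv]; ring
  have hzxy : z • x + y = (2 : ℂ)⁻¹ • ((u • x + y) + (v • x + y)) := by
    rw [hz2]; module
  rw [hzxy]
  calc ‖(2 : ℂ)⁻¹ • ((u • x + y) + (v • x + y))‖
      ≤ ‖(2:ℂ)⁻¹‖ * (‖u • x + y‖ + ‖v • x + y‖) := by
        rw [norm_smul]
        exact mul_le_mul_of_nonneg_left (norm_add_le _ _) (norm_nonneg _)
    _ ≤ ‖(2:ℂ)⁻¹‖ * (1 + 1) := by
        apply mul_le_mul_of_nonneg_left _ (norm_nonneg _)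
        exact add_le_add (h u hu) (h v hv)
    _ = 1 := by norm_num

/-- Let `A` be a unital Banach algebra with `‖1‖ = 1` and `e ∈ A` an
idempotent.  Then `‖exp(iλe)‖ ≤ 1` for all real `λ` iff the homomorphism
`β_e : ℂ ⊕ ℂ → A`, `(λ₁, λ₂) ↦ λ₁ e + λ₂ (1 - e)`, is contractive for the maximum norm. -/
theorem stmt_7 {A : Type*} [NormedRing A] [NormedAlgebra ℂ A] [CompleteSpace A] [NormOneClass A]
    (e : A) (he : e * e = e) :
    (∀ l : ℝ, ‖NormedSpace.exp (((l : ℂ) * Complex.I) • e)‖ ≤ 1) ↔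
      (∀ l₁ l₂ : ℂ, ‖l₁ • e + l₂ • (1 - e)‖ ≤ max ‖l₁‖ ‖l₂‖) := by
  have key : ∀ l : ℝ, NormedSpace.exp (((l : ℂ) * Complex.I) • e)
      = Complex.exp ((l : ℂ) * Complex.I) • e + (1 - e) := fun l => exp_idem e he _
  constructor
  · intro h l₁ l₂
    -- circle bound: ‖z • e + (1 - e)‖ ≤ 1 for |z| = 1
    have circ : ∀ z : ℂ, ‖z‖ = 1 → ‖z • e + (1 - e)‖ ≤ 1 := by
      intro z hz
      have hzz : z = Complex.exp ((z.arg : ℂ) * Complex.I) := by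
        conv_lhs => rw [← Complex.norm_mul_exp_arg_mul_I z]
        rw [hz]
        simp
      rw [hzz]
      have := h z.arg
      rw [key] at this
      exact this
    have discE : ∀ z : ℂ, ‖z‖ ≤ 1 → ‖z • e + (1 - e)‖ ≤ 1 :=
      disc_bound e (1 - e) circ
    -- other circle bound: ‖e + w • (1 - e)‖ ≤ 1 for |w| = 1
    have circ' : ∀ w : ℂ, ‖w‖ = 1 → ‖w • (1 - e) + e‖ ≤ 1 := by
      intro w hw
      have hw0 : w ≠ 0 := by
        intro h0; rw [h0] at hw; simp at hw
      have : w • (1 - e) + e = w • (w⁻¹ • e + (1 - e)) := by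
        rw [smul_add, smul_smul, mul_inv_cancel₀ hw0, one_smul]
        abel
      rw [this, norm_smul]
      have h1 : ‖w‖ = 1 := hw
      rw [h1, one_mul]
      apply circ
      rw [norm_inv, hw]; norm_num
    have discE' : ∀ w : ℂ, ‖w‖ ≤ 1 → ‖w • (1 - e) + e‖ ≤ 1 :=
      disc_bound (1 - e) e circ'
    rcases le_total ‖l₁‖ ‖l₂‖ with hle | hle
    · rw [max_eq_right hle]
      rcases eq_or_ne l₂ 0 with rfl | h2
      · have h1 : l₁ = 0 := norm_le_zero_iff.mp (by simpa using hle)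
        simp [h1]
      · have : l₁ • e + l₂ • (1 - e) = l₂ • ((l₁ / l₂) • e + (1 - e)) := by
          rw [smul_add, smul_smul, mul_div_cancel₀ _ h2]
        rw [this, norm_smul]
        have : ‖(l₁ / l₂) • e + (1 - e)‖ ≤ 1 := by
          apply discE
          rw [norm_div]
          rw [div_le_one (by simpa [norm_pos_iff] using h2 : (0:ℝ) < ‖l₂‖)]
          exact hle
        calc ‖l₂‖ * ‖(l₁ / l₂) • e + (1 - e)‖ ≤ ‖l₂‖ * 1 :=
              mul_le_mul_of_nonneg_left this (norm_nonneg _)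
          _ = ‖l₂‖ := mul_one _
    · rw [max_eq_left hle]
      rcases eq_or_ne l₁ 0 with rfl | h1
      · have h2 : l₂ = 0 := by
          exact norm_le_zero_iff.mp (by simpa using hle)
        simp [h2]
      · have : l₁ • e + l₂ • (1 - e) = l₁ • ((l₂ / l₁) • (1 - e) + e) := by
          rw [smul_add, smul_smul, mul_div_cancel₀ _ h1]
          abel
        rw [this, norm_smul]
        have : ‖(l₂ / l₁) • (1 - e) + e‖ ≤ 1 := by
          apply discE'
          rw [norm_div]
          rw [div_le_one (by simpa [norm_pos_iff] using h1 : (0:ℝ) < ‖l₁‖)]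
          exact hle
        calc ‖l₁‖ * ‖(l₂ / l₁) • (1 - e) + e‖ ≤ ‖l₁‖ * 1 :=
              mul_le_mul_of_nonneg_left this (norm_nonneg _)
          _ = ‖l₁‖ := mul_one _
  · intro h l
    rw [key]
    have := h (Complex.exp ((l : ℂ) * Complex.I)) 1
    rw [one_smul] at this
    refine this.trans ?_
    have habs : ‖Complex.exp ((l : ℂ) * Complex.I)‖ = 1 := Complex.norm_exp_ofReal_mul_I l
    rw [habs]
    simp
end

section
/- Let p ∈ [1, ∞) with p ≠ 2 and let d ∈ ℤ_{>0}. A matrix s ∈ M_d(ℂ) is an invertible isometry of ℓ^p_d if and only if s is a complex permutation matrix, i.e., s = Σ_{j=1}^d λ_j e_{σ(j),j} for some permutation σ of {1,…,d} and scalars λ_j with |λ_j| = 1. -/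
open scoped ENNReal

section ScalarLemmas

private lemma strict_superadd {r : ℝ} (hr : 1 < r) {x y : ℝ} (hx : 0 < x) (hy : 0 < y) :
    x ^ r + y ^ r < (x + y) ^ r := by
  have h1 : (0:ℝ) < r - 1 := by linarith
  have hxy : (0:ℝ) < x + y := by linarith
  have hxx : x ^ r = x ^ (r - 1) * x := by
    nth_rewrite 1 [show r = (r - 1) + 1 by ring]
    rw [Real.rpow_add_one hx.ne']
  have hyy : y ^ r = y ^ (r - 1) * y := by
    nth_rewrite 1 [show r = (r - 1) + 1 by ring]
    rw [Real.rpow_add_one hy.ne']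
  have hx' : x ^ (r-1) < (x+y) ^ (r-1) := Real.rpow_lt_rpow hx.le (by linarith) h1
  have hy' : y ^ (r-1) < (x+y) ^ (r-1) := Real.rpow_lt_rpow hy.le (by linarith) h1
  calc x ^ r + y ^ r = x ^ (r-1) * x + y ^ (r-1) * y := by rw [← hxx, ← hyy]
    _ < (x+y) ^ (r-1) * x + (x+y) ^ (r-1) * y :=
        add_lt_add (mul_lt_mul_of_pos_right hx' hx) (mul_lt_mul_of_pos_right hy' hy)
    _ = (x+y) ^ (r-1) * (x+y) := by ring
    _ = (x+y) ^ r := by rw [← Real.rpow_add_one hxy.ne' (r-1), sub_add_cancel]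

private lemma strict_subadd {r : ℝ} (hr0 : 0 < r) (hr1 : r < 1) {x y : ℝ}
    (hx : 0 < x) (hy : 0 < y) : (x + y) ^ r < x ^ r + y ^ r := by
  have h1 : r - 1 < 0 := by linarith
  have hxy : (0:ℝ) < x + y := by linarith
  have hxx : x ^ r = x ^ (r - 1) * x := by
    nth_rewrite 1 [show r = (r - 1) + 1 by ring]
    rw [Real.rpow_add_one hx.ne']
  have hyy : y ^ r = y ^ (r - 1) * y := by
    nth_rewrite 1 [show r = (r - 1) + 1 by ring]
    rw [Real.rpow_add_one hy.ne']
  have hx' : (x+y) ^ (r-1) < x ^ (r-1) := Real.rpow_lt_rpow_of_neg hx (by linarith) h1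
  have hy' : (x+y) ^ (r-1) < y ^ (r-1) := Real.rpow_lt_rpow_of_neg hy (by linarith) h1
  calc (x+y) ^ r = (x+y) ^ (r-1) * (x+y) := by
        rw [← Real.rpow_add_one hxy.ne' (r-1), sub_add_cancel]
    _ = (x+y) ^ (r-1) * x + (x+y) ^ (r-1) * y := by ring
    _ < x ^ (r-1) * x + y ^ (r-1) * y :=
        add_lt_add (mul_lt_mul_of_pos_right hx' hx) (mul_lt_mul_of_pos_right hy' hy)
    _ = x ^ r + y ^ r := by rw [← hxx, ← hyy]

private lemma superadd_le {r : ℝ} (hr : 1 ≤ r) {x y : ℝ} (hx : 0 ≤ x) (hy : 0 ≤ y) :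
    x ^ r + y ^ r ≤ (x + y) ^ r := by
  have hr0 : r ≠ 0 := by linarith
  rcases eq_or_lt_of_le hx with h | h
  · simp [← h, Real.zero_rpow hr0]
  rcases eq_or_lt_of_le hy with h' | h'
  · simp [← h', Real.zero_rpow hr0]
  rcases eq_or_lt_of_le hr with h'' | h''
  · simp [← h'']
  · exact (strict_superadd h'' h h').le

private lemma subadd_le {r : ℝ} (hr0 : 0 < r) (hr1 : r ≤ 1) {x y : ℝ} (hx : 0 ≤ x) (hy : 0 ≤ y) :
    (x + y) ^ r ≤ x ^ r + y ^ r := by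
  rcases eq_or_lt_of_le hx with h | h
  · simp [← h, Real.zero_rpow hr0.ne']
  rcases eq_or_lt_of_le hy with h' | h'
  · simp [← h', Real.zero_rpow hr0.ne']
  rcases eq_or_lt_of_le hr1 with h'' | h''
  · simp [h'']
  · exact (strict_subadd hr0 h'' h h').le

private lemma pm_convex {r : ℝ} (hr : 1 ≤ r) {x y : ℝ} (hx : 0 ≤ x) (hy : 0 ≤ y) :
    ((x + y) / 2) ^ r ≤ (x ^ r + y ^ r) / 2 := by
  have h := (convexOn_rpow hr).2 (Set.mem_Ici.mpr hx) (Set.mem_Ici.mpr hy)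
    (by norm_num : (0:ℝ) ≤ 1/2) (by norm_num : (0:ℝ) ≤ 1/2) (by norm_num)
  simp only [smul_eq_mul] at h
  have h2 : (x + y) / 2 = 1/2 * x + 1/2 * y := by ring
  rw [h2]
  linarith

private lemma pm_concave {r : ℝ} (hr0 : 0 ≤ r) (hr1 : r ≤ 1) {x y : ℝ} (hx : 0 ≤ x) (hy : 0 ≤ y) :
    (x ^ r + y ^ r) / 2 ≤ ((x + y) / 2) ^ r := by
  have h := (Real.concaveOn_rpow hr0 hr1).2 (Set.mem_Ici.mpr hx) (Set.mem_Ici.mpr hy)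
    (by norm_num : (0:ℝ) ≤ 1/2) (by norm_num : (0:ℝ) ≤ 1/2) (by norm_num)
  simp only [smul_eq_mul] at h
  have h2 : (x + y) / 2 = 1/2 * x + 1/2 * y := by ring
  rw [h2]
  linarith

end ScalarLemmas
section Clarkson

private lemma norm_rpow_eq_sq (a : ℂ) (q : ℝ) : ‖a‖ ^ q = (‖a‖ ^ 2) ^ (q/2) := by
  have h := Real.rpow_natCast_mul (norm_nonneg a) 2 (q/2)
  rw [show ((2:ℕ):ℝ) * (q/2) = q by push_cast; ring] at h
  exact h

private lemma par_id (a b : ℂ) : ‖a+b‖ ^ 2 + ‖a-b‖ ^ 2 = 2 * (‖a‖ ^ 2 + ‖b‖ ^ 2) := by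
  have h := parallelogram_law_with_norm ℂ a b
  simp only [pow_two]
  linarith

private lemma clarkson_gt_le {q : ℝ} (hq : 2 < q) (a b : ℂ) :
    2 * (‖a‖ ^ q + ‖b‖ ^ q) ≤ ‖a+b‖ ^ q + ‖a-b‖ ^ q := by
  have hr : 1 < q / 2 := by linarith
  rw [norm_rpow_eq_sq a, norm_rpow_eq_sq b, norm_rpow_eq_sq (a+b), norm_rpow_eq_sq (a-b)]
  set r := q / 2
  set X := ‖a‖ ^ 2 with hX
  set Y := ‖b‖ ^ 2 with hY
  set U := ‖a+b‖ ^ 2 with hU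
  set V := ‖a-b‖ ^ 2 with hV
  have hX0 : 0 ≤ X := sq_nonneg _
  have hY0 : 0 ≤ Y := sq_nonneg _
  have hU0 : 0 ≤ U := sq_nonneg _
  have hV0 : 0 ≤ V := sq_nonneg _
  have hpar : U + V = 2 * (X + Y) := par_id a b
  have h1 : X ^ r + Y ^ r ≤ (X + Y) ^ r := superadd_le hr.le hX0 hY0
  have h2 : ((U + V) / 2) ^ r ≤ (U ^ r + V ^ r) / 2 := pm_convex hr.le hU0 hV0
  have h3 : (X + Y) ^ r = ((U + V) / 2) ^ r := by rw [hpar]; ring_nf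
  linarith

private lemma clarkson_gt_lt {q : ℝ} (hq : 2 < q) {a b : ℂ} (ha : a ≠ 0) (hb : b ≠ 0) :
    2 * (‖a‖ ^ q + ‖b‖ ^ q) < ‖a+b‖ ^ q + ‖a-b‖ ^ q := by
  have hr : 1 < q / 2 := by linarith
  rw [norm_rpow_eq_sq a, norm_rpow_eq_sq b, norm_rpow_eq_sq (a+b), norm_rpow_eq_sq (a-b)]
  set r := q / 2
  set X := ‖a‖ ^ 2 with hX
  set Y := ‖b‖ ^ 2 with hY
  set U := ‖a+b‖ ^ 2 with hU
  set V := ‖a-b‖ ^ 2 with hV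
  have hX0 : 0 < X := pow_pos (norm_pos_iff.mpr ha) 2
  have hY0 : 0 < Y := pow_pos (norm_pos_iff.mpr hb) 2
  have hU0 : 0 ≤ U := sq_nonneg _
  have hV0 : 0 ≤ V := sq_nonneg _
  have hpar : U + V = 2 * (X + Y) := par_id a b
  have h1 : X ^ r + Y ^ r < (X + Y) ^ r := strict_superadd hr hX0 hY0
  have h2 : ((U + V) / 2) ^ r ≤ (U ^ r + V ^ r) / 2 := pm_convex hr.le hU0 hV0
  have h3 : (X + Y) ^ r = ((U + V) / 2) ^ r := by rw [hpar]; ring_nf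
  linarith

private lemma clarkson_lt_le {q : ℝ} (hq0 : 0 < q) (hq : q < 2) (a b : ℂ) :
    ‖a+b‖ ^ q + ‖a-b‖ ^ q ≤ 2 * (‖a‖ ^ q + ‖b‖ ^ q) := by
  have hr0 : 0 < q / 2 := by linarith
  have hr1 : q / 2 < 1 := by linarith
  rw [norm_rpow_eq_sq a, norm_rpow_eq_sq b, norm_rpow_eq_sq (a+b), norm_rpow_eq_sq (a-b)]
  set r := q / 2
  set X := ‖a‖ ^ 2 with hX
  set Y := ‖b‖ ^ 2 with hY
  set U := ‖a+b‖ ^ 2 with hU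
  set V := ‖a-b‖ ^ 2 with hV
  have hX0 : 0 ≤ X := sq_nonneg _
  have hY0 : 0 ≤ Y := sq_nonneg _
  have hU0 : 0 ≤ U := sq_nonneg _
  have hV0 : 0 ≤ V := sq_nonneg _
  have hpar : U + V = 2 * (X + Y) := par_id a b
  have h1 : (X + Y) ^ r ≤ X ^ r + Y ^ r := subadd_le hr0 hr1.le hX0 hY0
  have h2 : (U ^ r + V ^ r) / 2 ≤ ((U + V) / 2) ^ r := pm_concave hr0.le hr1.le hU0 hV0
  have h3 : (X + Y) ^ r = ((U + V) / 2) ^ r := by rw [hpar]; ring_nf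
  linarith

private lemma clarkson_lt_lt {q : ℝ} (hq0 : 0 < q) (hq : q < 2) {a b : ℂ}
    (ha : a ≠ 0) (hb : b ≠ 0) :
    ‖a+b‖ ^ q + ‖a-b‖ ^ q < 2 * (‖a‖ ^ q + ‖b‖ ^ q) := by
  have hr0 : 0 < q / 2 := by linarith
  have hr1 : q / 2 < 1 := by linarith
  rw [norm_rpow_eq_sq a, norm_rpow_eq_sq b, norm_rpow_eq_sq (a+b), norm_rpow_eq_sq (a-b)]
  set r := q / 2
  set X := ‖a‖ ^ 2 with hX
  set Y := ‖b‖ ^ 2 with hY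
  set U := ‖a+b‖ ^ 2 with hU
  set V := ‖a-b‖ ^ 2 with hV
  have hX0 : 0 < X := pow_pos (norm_pos_iff.mpr ha) 2
  have hY0 : 0 < Y := pow_pos (norm_pos_iff.mpr hb) 2
  have hU0 : 0 ≤ U := sq_nonneg _
  have hV0 : 0 ≤ V := sq_nonneg _
  have hpar : U + V = 2 * (X + Y) := par_id a b
  have h1 : (X + Y) ^ r < X ^ r + Y ^ r := strict_subadd hr0 hr1 hX0 hY0
  have h2 : (U ^ r + V ^ r) / 2 ≤ ((U + V) / 2) ^ r := pm_concave hr0.le hr1.le hU0 hV0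
  have h3 : (X + Y) ^ r = ((U + V) / 2) ^ r := by rw [hpar]; ring_nf
  linarith

end Clarkson
private lemma pilp_norm_rpow {p : ℝ≥0∞} [Fact (1 ≤ p)] (hp : p ≠ ⊤) {d : ℕ}
    (f : PiLp p (fun _ : Fin d => ℂ)) :
    ‖f‖ ^ p.toReal = ∑ i, ‖f i‖ ^ p.toReal := by
  have hq : 0 < p.toReal :=
    ENNReal.toReal_pos (zero_lt_one.trans_le (Fact.out : (1:ℝ≥0∞) ≤ p)).ne' hp
  rw [PiLp.norm_eq_sum hq, ← Real.rpow_mul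
    (Finset.sum_nonneg fun i _ => Real.rpow_nonneg (norm_nonneg _) _),
    one_div_mul_cancel hq.ne', Real.rpow_one]

/-- A `d × d` complex matrix, viewed as a bounded operator on `ℓ^p_d`. -/
noncomputable def matrixLp (p : ℝ≥0∞) [Fact (1 ≤ p)] {d : ℕ}
    (M : Matrix (Fin d) (Fin d) ℂ) :
    PiLp p (fun _ : Fin d => ℂ) →L[ℂ] PiLp p (fun _ : Fin d => ℂ) :=
  LinearMap.toContinuousLinearMap
    ((WithLp.linearEquiv p ℂ (∀ _ : Fin d, ℂ)).symm.toLinearMap ∘ₗ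
      M.mulVecLin ∘ₗ (WithLp.linearEquiv p ℂ (∀ _ : Fin d, ℂ)).toLinearMap)

private lemma matrixLp_apply' (p : ℝ≥0∞) [Fact (1 ≤ p)] {d : ℕ} (M : Matrix (Fin d) (Fin d) ℂ)
    (ξ : PiLp p (fun _ : Fin d => ℂ)) (i : Fin d) :
    (matrixLp p M ξ) i = M.mulVec ξ i := rfl

/-- For `p ∈ [1, ∞)`, `p ≠ 2`, a matrix `s ∈ M_d(ℂ)` is an invertible
isometry of `ℓ^p_d` iff it is a complex permutation matrix
`s = ∑_j λ_j e_{σ(j), j}` with `σ` a permutation and `|λ_j| = 1`. -/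
theorem stmt_13 (p : ℝ≥0∞) [Fact (1 ≤ p)] (hp : p ≠ ⊤) (hp2 : p ≠ 2) (d : ℕ) (hd : 0 < d)
    (s : Matrix (Fin d) (Fin d) ℂ) :
    (IsUnit s ∧ ∀ ξ : PiLp p (fun _ : Fin d => ℂ), ‖matrixLp p s ξ‖ = ‖ξ‖) ↔
      ∃ (σ : Equiv.Perm (Fin d)) (l : Fin d → ℂ), (∀ j, ‖l j‖ = 1) ∧
        s = Matrix.of fun j k => if σ k = j then l k else 0 := by
  have hfact : (1:ℝ≥0∞) ≤ p := Fact.out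
  set q := p.toReal with hqdef
  have hq1 : 1 ≤ q := by
    rw [hqdef, ← ENNReal.toReal_one]
    exact ENNReal.toReal_mono hp hfact
  have hq0 : 0 < q := zero_lt_one.trans_le hq1
  have hq2 : q ≠ 2 := by
    intro h
    exact hp2 ((ENNReal.toReal_eq_toReal_iff' hp (by norm_num)).mp
      (by rw [← hqdef, h]; norm_num))
  constructor
  · rintro ⟨hunit, hiso⟩
    have hkey : ∀ ξ : Fin d → ℂ, ∑ i, ‖s.mulVec ξ i‖ ^ q = ∑ i, ‖ξ i‖ ^ q := by
      intro ξ
      have h1 := hiso ((WithLp.equiv p (∀ _ : Fin d, ℂ)).symm ξ)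
      have h2 : ‖matrixLp p s ((WithLp.equiv p (∀ _ : Fin d, ℂ)).symm ξ)‖ ^ q
          = ‖((WithLp.equiv p (∀ _ : Fin d, ℂ)).symm ξ)‖ ^ q := by rw [h1]
      rw [pilp_norm_rpow hp, pilp_norm_rpow hp] at h2
      exact h2
    have hsingle : ∀ (j : Fin d) (c : ℂ), ∑ i, ‖(Pi.single j c : Fin d → ℂ) i‖ ^ q = ‖c‖ ^ q := by
      intro j c
      rw [Finset.sum_eq_single j]
      · rw [Pi.single_eq_same]
      · intro i _ hij
        rw [Pi.single_eq_of_ne hij, norm_zero, Real.zero_rpow hq0.ne']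
      · intro h; exact absurd (Finset.mem_univ j) h
    have hcol : ∀ j, ∑ i, ‖s i j‖ ^ q = 1 := by
      intro j
      have h := hkey (Pi.single j 1)
      rw [hsingle j 1, norm_one, Real.one_rpow] at h
      rw [← h]
      refine Finset.sum_congr rfl fun i _ => ?_
      rw [Matrix.mulVec_single]
      norm_num
    have hpair : ∀ (j k : Fin d), j ≠ k → ∀ c c' : ℂ,
        ∑ i, ‖((Pi.single j c + Pi.single k c' : Fin d → ℂ)) i‖ ^ q = ‖c‖ ^ q + ‖c'‖ ^ q := by
      intro j k hjk c c'
      have hptw : ∀ i, ‖((Pi.single j c + Pi.single k c' : Fin d → ℂ)) i‖ ^ q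
          = ‖(Pi.single j c : Fin d → ℂ) i‖ ^ q + ‖(Pi.single k c' : Fin d → ℂ) i‖ ^ q := by
        intro i
        rcases eq_or_ne i j with rfl | hij
        · rw [Pi.add_apply, Pi.single_eq_same, Pi.single_eq_of_ne hjk, add_zero,
            norm_zero, Real.zero_rpow hq0.ne', add_zero]
        · rcases eq_or_ne i k with rfl | hik
          · rw [Pi.add_apply, Pi.single_eq_same, Pi.single_eq_of_ne hij, zero_add,
              norm_zero, Real.zero_rpow hq0.ne', zero_add]
          · rw [Pi.add_apply, Pi.single_eq_of_ne hij, Pi.single_eq_of_ne hik, add_zero,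
              norm_zero, Real.zero_rpow hq0.ne', add_zero]
      rw [Finset.sum_congr rfl fun i _ => hptw i, Finset.sum_add_distrib,
        hsingle, hsingle]
    have hmv2 : ∀ (j k : Fin d) (c c' : ℂ) (i : Fin d),
        s.mulVec (Pi.single j c + Pi.single k c') i = s i j * c + s i k * c' := by
      intro j k c c' i
      rw [Matrix.mulVec_add, Pi.add_apply, Matrix.mulVec_single, Matrix.mulVec_single]
      rfl
    have hdisj : ∀ (j k : Fin d), j ≠ k → ∀ i, s i j * s i k = 0 := by
      intro j k hjk
      have hplus := hkey (Pi.single j 1 + Pi.single k 1)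
      have hminus := hkey (Pi.single j 1 + Pi.single k (-1))
      rw [hpair j k hjk] at hplus hminus
      simp only [norm_one, norm_neg, Real.one_rpow] at hplus hminus
      have e1 : ∑ i, ‖s i j + s i k‖ ^ q = 2 := by
        have h5 : ∑ i, ‖s.mulVec (Pi.single j 1 + Pi.single k 1) i‖ ^ q
            = ∑ i, ‖s i j + s i k‖ ^ q :=
          Finset.sum_congr rfl fun i _ => by rw [hmv2, mul_one, mul_one]
        rw [← h5, hplus]; norm_num
      have e2 : ∑ i, ‖s i j - s i k‖ ^ q = 2 := by
        have h5 : ∑ i, ‖s.mulVec (Pi.single j 1 + Pi.single k (-1)) i‖ ^ q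
            = ∑ i, ‖s i j - s i k‖ ^ q :=
          Finset.sum_congr rfl fun i _ => by
            rw [hmv2, mul_one, mul_neg_one, ← sub_eq_add_neg]
        rw [← h5, hminus]; norm_num
      have hsum_eq : ∑ i, (‖s i j + s i k‖ ^ q + ‖s i j - s i k‖ ^ q)
          = ∑ i, 2 * (‖s i j‖ ^ q + ‖s i k‖ ^ q) := by
        rw [Finset.sum_add_distrib, e1, e2]
        have h4 : ∑ i, 2 * (‖s i j‖ ^ q + ‖s i k‖ ^ q)
            = 2 * (∑ i, ‖s i j‖ ^ q + ∑ i, ‖s i k‖ ^ q) := by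
          rw [← Finset.sum_add_distrib, Finset.mul_sum]
        rw [h4, hcol j, hcol k]
        norm_num
      intro i
      by_contra hne
      have haz : s i j ≠ 0 := fun h => hne (by rw [h, zero_mul])
      have hbz : s i k ≠ 0 := fun h => hne (by rw [h, mul_zero])
      rcases lt_or_gt_of_ne hq2 with hlt | hgt
      · have heq := (Finset.sum_eq_sum_iff_of_le
          (fun i' _ => clarkson_lt_le hq0 hlt (s i' j) (s i' k))).mp hsum_eq i
          (Finset.mem_univ i)
        exact (clarkson_lt_lt hq0 hlt haz hbz).ne heq
      · have heq := (Finset.sum_eq_sum_iff_of_le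
          (fun i' _ => clarkson_gt_le hgt (s i' j) (s i' k))).mp hsum_eq.symm i
          (Finset.mem_univ i)
        exact (clarkson_gt_lt hgt haz hbz).ne heq
    have hcolnz : ∀ j, ∃ i, s i j ≠ 0 := by
      intro j
      by_contra h
      push_neg at h
      have h1 := hcol j
      rw [Finset.sum_congr rfl fun i _ => by
        rw [h i, norm_zero, Real.zero_rpow hq0.ne']] at h1
      simp at h1
    choose σ0 hσ0 using hcolnz
    have hinj : Function.Injective σ0 := by
      intro j k h
      by_contra hjk
      have hd0 := hdisj j k hjk (σ0 j)
      have h2 : s (σ0 j) k ≠ 0 := by rw [h]; exact hσ0 k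
      exact mul_ne_zero (hσ0 j) h2 hd0
    have hbij : Function.Bijective σ0 := Finite.injective_iff_bijective.mp hinj
    have hzero : ∀ (i k : Fin d), i ≠ σ0 k → s i k = 0 := by
      intro i k hik
      obtain ⟨j, rfl⟩ := hbij.2 i
      have hjk : j ≠ k := fun h => hik (by rw [h])
      rcases mul_eq_zero.mp (hdisj j k hjk (σ0 j)) with h | h
      · exact absurd h (hσ0 j)
      · exact h
    refine ⟨Equiv.ofBijective σ0 hbij, fun j => s (σ0 j) j, ?_, ?_⟩
    · intro j
      have h1 : ∑ i, ‖s i j‖ ^ q = ‖s (σ0 j) j‖ ^ q := by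
        rw [Finset.sum_eq_single (σ0 j)]
        · intro i _ hij
          rw [hzero i j hij, norm_zero, Real.zero_rpow hq0.ne']
        · intro h; exact absurd (Finset.mem_univ _) h
      have h2 : ‖s (σ0 j) j‖ ^ q = 1 := by rw [← h1]; exact hcol j
      have hnn : (0:ℝ) ≤ ‖s (σ0 j) j‖ := norm_nonneg _
      have h3 : (‖s (σ0 j) j‖ ^ q) ^ (1/q) = ‖s (σ0 j) j‖ := by
        rw [← Real.rpow_mul hnn, mul_one_div, div_self hq0.ne', Real.rpow_one]
      rw [← h3, h2, Real.one_rpow]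
    · ext i k
      rw [Matrix.of_apply]
      by_cases h : Equiv.ofBijective σ0 hbij k = i
      · rw [if_pos h]
        have h' : σ0 k = i := h
        rw [← h']
      · rw [if_neg h]
        exact hzero i k fun h' => h h'.symm
  · rintro ⟨σ, l, hl, rfl⟩
    have hlnz : ∀ j, l j ≠ 0 := by
      intro j h
      have h1 := hl j
      rw [h, norm_zero] at h1
      norm_num at h1
    set S : Matrix (Fin d) (Fin d) ℂ :=
      Matrix.of fun j k => if σ k = j then l k else 0 with hS
    have hmv : ∀ (ξ : Fin d → ℂ) (i : Fin d),
        S.mulVec ξ i = l (σ.symm i) * ξ (σ.symm i) := by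
      intro ξ i
      simp only [Matrix.mulVec, dotProduct]
      rw [Finset.sum_eq_single (σ.symm i)]
      · rw [hS, Matrix.of_apply, if_pos (σ.apply_symm_apply i)]
      · intro k _ hk
        have hki : σ k ≠ i := fun h => hk (by rw [← h, Equiv.symm_apply_apply])
        rw [hS, Matrix.of_apply, if_neg hki, zero_mul]
      · intro h; exact absurd (Finset.mem_univ _) h
    constructor
    · set T : Matrix (Fin d) (Fin d) ℂ :=
        Matrix.of fun k i => if σ k = i then (l k)⁻¹ else 0 with hT
      have hST : S * T = 1 := by
        ext i i'
        rw [Matrix.mul_apply, Finset.sum_eq_single (σ.symm i)]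
        · rcases eq_or_ne i i' with rfl | h
          · simp [hS, hT, Matrix.one_apply, mul_inv_cancel₀ (hlnz (σ.symm i))]
          · simp [hS, hT, Matrix.one_apply, h]
        · intro k _ hk
          have hki : σ k ≠ i := fun h' => hk (by rw [← h', Equiv.symm_apply_apply])
          rw [hS, Matrix.of_apply, if_neg hki, zero_mul]
        · intro h; exact absurd (Finset.mem_univ _) h
      have hTS : T * S = 1 := by
        ext k k'
        rw [Matrix.mul_apply, Finset.sum_eq_single (σ k)]
        · rcases eq_or_ne k k' with rfl | h
          · simp [hS, hT, Matrix.one_apply, inv_mul_cancel₀ (hlnz k)]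
          · have hne : σ k' ≠ σ k := fun hh => h (σ.injective hh).symm
            simp [hS, hT, Matrix.one_apply, h, hne]
        · intro i _ hi
          have : σ k ≠ i := fun hh => hi hh.symm
          rw [hT, Matrix.of_apply, if_neg this, zero_mul]
        · intro h; exact absurd (Finset.mem_univ _) h
      exact ⟨⟨S, T, hST, hTS⟩, rfl⟩
    · intro ξ
      have hq0' : 0 < p.toReal := hq0
      rw [PiLp.norm_eq_sum hq0', PiLp.norm_eq_sum hq0']
      congr 1
      have happ : ∀ i, (matrixLp p S ξ) i = l (σ.symm i) * ξ (σ.symm i) :=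
        fun i => hmv ξ i
      rw [Finset.sum_congr rfl fun i _ => by rw [happ i, norm_mul, hl, one_mul]]
      exact Equiv.sum_comp σ.symm fun i => ‖ξ i‖ ^ p.toReal
end
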